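/- Every function F : (ℤ/3ℤ)² → ℤ/3ℤ that is zero at all points except possibly one point (a singular function) can be represented as F(x₁,x₂) = f(g₁(x₁) + g₂(x₂)) for some unary functions f, g₁, g₂ : ℤ/3ℤ → ℤ/3ℤ, where + is addition in ℤ/3ℤ. -/

import Mathlib

/-- Every singular function F : (ℤ/3ℤ)² → ℤ/3ℤ (zero except possibly at one point)
has a one-term representation f(g₁(x₁)+g₂(x₂)). -/
theorem stmt_3 (F : ZMod 3 × ZMod 3 → ZMod 3)
    (hF : ∃ p : ZMod 3 × ZMod 3, ∀ q : ZMod 3 × ZMod 3, q ≠ p → F q = 0) :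
    ∃ f g₁ g₂ : ZMod 3 → ZMod 3, ∀ x₁ x₂ : ZMod 3, F (x₁, x₂) = f (g₁ x₁ + g₂ x₂) := by
  obtain ⟨⟨a, b⟩, h⟩ := hF
  refine ⟨fun s => if s = 2 then F (a, b) else 0,
    fun x => if x = a then 1 else 0, fun x => if x = b then 1 else 0, ?_⟩
  intro x₁ x₂
  by_cases h1 : x₁ = a <;> by_cases h2 : x₂ = b <;>
    simp [h1, h2] <;>
    first
      | rfl
      | (apply h; simp [h1, h2])
      | (intro hc; exact absurd (by decide) hc)
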